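/- Let n ≥ 1 and let E be the graph of the quantum sphere S^{2n+1}_q. Then the map Φ : E^∞_ℓ → ℕ̄ⁿ_↗, where Φ(x)_i ∈ ℕ̄ is the number (possibly +∞) of indices j ≥ 1 with x_j ∈ {ℓ_1,…,ℓ_i}, is well defined (its values lie in ℕ̄ⁿ_↗) and is a homeomorphism. -/

import Mathlib

/-! Basic definitions: directed graphs, infinite path space, shift, finite paths,
shift equivalence, the graph groupoid and its topology (Kumjian-Pask-Raeburn-Renault). -/

variable {V E : Type*}

/-- The space `E^∞` of right-infinite paths of the graph with edge set `E`, source map `s`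
and target map `t`, as a subset of the product `ℕ → E` (sequences of composable edges). -/
def PathSp (s t : E → V) : Set (ℕ → E) := {x | ∀ i : ℕ, t (x i) = s (x (i + 1))}

/-- The one-sided shift on the infinite path space. -/
def shiftP (s t : E → V) (x : PathSp s t) : PathSp s t :=
  ⟨fun i => x.1 (i + 1), fun i => x.2 (i + 1)⟩

/-- Shift equivalence with lag `k`. -/
def SEquiv {X : Type*} (σ : X → X) (k : ℤ) (x y : X) : Prop :=
  ∃ j : ℕ, 0 ≤ (j : ℤ) + k ∧ σ^[j] x = σ^[((j : ℤ) + k).toNat] y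

/-- A finite path in the graph: a composable (possibly empty) list of edges together with a
source vertex (so that vertices are the paths of length `0`). -/
structure FinPath (s t : E → V) where
  src : V
  edges : List E
  chain : edges.Chain' (fun e f => t e = s f)
  srcOk : ∀ e ∈ edges.head?, s e = src

/-- The target of a finite path (its source, if the path has length 0). -/
def FinPath.tgt {s t : E → V} (α : FinPath s t) : V :=
  α.edges.getLast?.elim α.src t

/-- Concatenation of a finite list of edges with an infinite sequence of edges. -/
def catSeq (l : List E) (z : ℕ → E) : ℕ → E :=
  fun i => if h : i < l.length then l.get ⟨i, h⟩ else z (i - l.length)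

/-- The basic set `Z(α,β) = {(αz, |β|-|α|, βz) : z ∈ E^∞, s(z) = t(α) = t(β)}` of the
graph groupoid. -/
def ZSet (s t : E → V) (α β : FinPath s t) :
    Set (↥(PathSp s t) × ℤ × ↥(PathSp s t)) :=
  {q | ∃ z : ↥(PathSp s t), s (z.1 0) = α.tgt ∧ s (z.1 0) = β.tgt ∧
    q.1.1 = catSeq α.edges z.1 ∧
    q.2.1 = (β.edges.length : ℤ) - (α.edges.length : ℤ) ∧
    q.2.2.1 = catSeq β.edges z.1}

/-- The morphism space `𝒢¹ = {(x,k,y) : x ∼ₖ y}` of the graph groupoid. -/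
def G1 (s t : E → V) : Type _ :=
  {q : ↥(PathSp s t) × ℤ × ↥(PathSp s t) // SEquiv (shiftP s t) q.2.1 q.1 q.2.2}

/-- The topology of the graph groupoid: generated by the sets `Z(α,β)` with
`t(α) = t(β)`. -/
def G1Top (s t : E → V) : TopologicalSpace (G1 s t) :=
  TopologicalSpace.generateFrom
    {U | ∃ α β : FinPath s t, α.tgt = β.tgt ∧ U = Subtype.val ⁻¹' ZSet s t α β}

/-! The graph of the quantum sphere `S^{2n+1}_q` (Hong–Szymański, appendix version):
vertices `1, …, n+1` (here `Fin (n+1)`), a loop `ℓᵢ` at every vertex `i` (here `Sum.inl i`)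
and an edge `rᵢ : i → i+1` for `1 ≤ i ≤ n` (here `Sum.inr i` for `i : Fin n`). -/

/-- The edge set of the graph of `S^{2n+1}_q`. -/
abbrev SphE (n : ℕ) := Fin (n + 1) ⊕ Fin n

/-- Source map of the graph of `S^{2n+1}_q`. -/
def sphS (n : ℕ) : SphE n → Fin (n + 1)
  | .inl i => i
  | .inr i => i.castSucc

/-- Target map of the graph of `S^{2n+1}_q`. -/
def sphT (n : ℕ) : SphE n → Fin (n + 1)
  | .inl i => i
  | .inr i => i.succ

/-- The subset `E^∞_ℓ ⊆ E^∞` of infinite paths whose first edge is a loop. -/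
def ELoop (n : ℕ) : Set ↥(PathSp (sphS n) (sphT n)) :=
  {x | ∃ i : Fin (n + 1), x.1 0 = Sum.inl i}

/-- The map `Φ : E^∞ → ℕ̄ⁿ`: `Φ(x)ᵢ` is the number (possibly `+∞`) of indices `j` such that
`x_j` is one of the loops `ℓ₁, …, ℓᵢ` (vertices are `0`-indexed here, so the paper's loop
`ℓ_m`, `1 ≤ m ≤ i`, is `Sum.inl v` with `v + 1 ≤ i`, i.e. `(v : ℕ) ≤ (i : ℕ)` for
`i : Fin n` standing for the paper's index `i+1`). -/
noncomputable def PhiMap (n : ℕ) (x : ↥(PathSp (sphS n) (sphT n))) : Fin n → ℕ∞ :=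
  fun i => {j : ℕ | ∃ v : Fin (n + 1), x.1 j = Sum.inl v ∧ (v : ℕ) ≤ (i : ℕ)}.encard

namespace Stmt8

open Topology

variable {n : ℕ}

/-- The vertex of a path at step `j`. -/
def vtx (x : ↥(PathSp (sphS n) (sphT n))) (j : ℕ) : ℕ := (sphS n (x.1 j) : ℕ)

lemma vtx_le (x : ↥(PathSp (sphS n) (sphT n))) (j : ℕ) : vtx x j ≤ n :=
  Fin.is_le _

lemma vtx_succ_eq (x : ↥(PathSp (sphS n) (sphT n))) (j : ℕ) :
    vtx x (j + 1) = (sphT n (x.1 j) : ℕ) := by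
  rw [vtx, ← x.2 j]

lemma isLoop_iff (x : ↥(PathSp (sphS n) (sphT n))) (j : ℕ) :
    (∃ v, x.1 j = Sum.inl v) ↔ vtx x (j + 1) = vtx x j := by
  rw [vtx_succ_eq, vtx]
  rcases h : x.1 j with v | i
  · simp [sphS, sphT]
  · simp only [sphS, sphT, Fin.val_succ, Fin.coe_castSucc]
    constructor
    · rintro ⟨v, hv⟩; cases hv
    · omega

lemma vtx_succ (x : ↥(PathSp (sphS n) (sphT n))) (j : ℕ) :
    vtx x (j + 1) = vtx x j ∨ vtx x (j + 1) = vtx x j + 1 := by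
  rw [vtx_succ_eq, vtx]
  rcases h : x.1 j with v | i
  · simp [sphS, sphT]
  · simp [sphS, sphT]

lemma vtx_mono (x : ↥(PathSp (sphS n) (sphT n))) : Monotone (vtx x) := by
  apply monotone_nat_of_le_succ
  intro j
  rcases vtx_succ x j with h | h <;> omega

/-- Counting loops below `T`: telescoping. -/
lemma count_loops (x : ↥(PathSp (sphS n) (sphT n))) (T : ℕ) :
    ((Finset.range T).filter (fun j => vtx x (j + 1) = vtx x j)).card + vtx x T
      = T + vtx x 0 := by
  induction T with
  | zero => simp
  | succ T ih =>
    rw [Finset.range_add_one, Finset.filter_insert]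
    rcases vtx_succ x T with h | h
    · rw [if_pos h, Finset.card_insert_of_notMem (by simp)]
      omega
    · rw [if_neg (by omega)]
      omega

lemma upsteps_finite (x : ↥(PathSp (sphS n) (sphT n))) :
    {j | vtx x (j + 1) ≠ vtx x j}.Finite := by
  apply Set.Finite.of_finite_image (f := vtx x)
  · exact (Set.finite_Iic n).subset (by rintro _ ⟨j, _, rfl⟩; exact vtx_le x j)
  · have key : ∀ a b, a ∈ {j | vtx x (j + 1) ≠ vtx x j} → a < b → vtx x a < vtx x b := by
      intro a b ha hab
      have h1 : vtx x (a + 1) = vtx x a + 1 := by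
        rcases vtx_succ x a with h | h
        · exact absurd h ha
        · exact h
      have := vtx_mono x (show a + 1 ≤ b by omega)
      omega
    intro a ha b hb hab
    by_contra hne
    rcases Nat.lt_or_ge a b with h | h
    · exact absurd hab (Nat.ne_of_lt (key a b ha h))
    · have hba : b < a := by omega
      exact absurd hab.symm (Nat.ne_of_lt (key b a hb hba))

lemma loops_infinite (x : ↥(PathSp (sphS n) (sphT n))) :
    {j | vtx x (j + 1) = vtx x j}.Infinite := by
  have := (upsteps_finite x).infinite_compl
  convert this using 1
  ext j; simp

lemma phi_set_eq (x : ↥(PathSp (sphS n) (sphT n))) (i : Fin n) :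
    {j : ℕ | ∃ v : Fin (n + 1), x.1 j = Sum.inl v ∧ (v : ℕ) ≤ (i : ℕ)}
      = {j | vtx x (j + 1) = vtx x j ∧ vtx x j ≤ (i : ℕ)} := by
  ext j
  simp only [Set.mem_setOf_eq]
  constructor
  · rintro ⟨v, hv, hvi⟩
    have hvtx : vtx x j = (v : ℕ) := by rw [vtx, hv]; rfl
    exact ⟨(isLoop_iff x j).1 ⟨v, hv⟩, by omega⟩
  · rintro ⟨hl, hle⟩
    obtain ⟨v, hv⟩ := (isLoop_iff x j).2 hl
    have hvtx : vtx x j = (v : ℕ) := by rw [vtx, hv]; rfl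
    exact ⟨v, hv, by omega⟩

/-- The key structural lemma: the vertex of the path at step `j` is below `i` iff
`j + v₀` is less than `Φ(x)ᵢ + i + 1`. -/
lemma key (x : ↥(PathSp (sphS n) (sphT n))) (i : Fin n) (j : ℕ) :
    vtx x j ≤ (i : ℕ) ↔ ((j + vtx x 0 : ℕ) : ℕ∞) < PhiMap n x i + (i : ℕ) + 1 := by
  have hset := phi_set_eq x i
  by_cases hb : ∃ T, (i : ℕ) < vtx x T
  · obtain ⟨T, hT1, hmin⟩ : ∃ T, (i : ℕ) < vtx x T ∧ ∀ m, m < T → vtx x m ≤ (i : ℕ) :=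
      ⟨Nat.find hb, Nat.find_spec hb, fun m hm => le_of_not_gt (Nat.find_min hb hm)⟩
    have hjlt : ∀ j, vtx x j ≤ (i : ℕ) ↔ j < T := by
      intro j
      constructor
      · intro h
        by_contra h'
        push_neg at h'
        have := vtx_mono x h'
        omega
      · exact hmin j
    have hfin : {j : ℕ | ∃ v : Fin (n + 1), x.1 j = Sum.inl v ∧ (v : ℕ) ≤ (i : ℕ)}
        = ↑((Finset.range T).filter fun j => vtx x (j + 1) = vtx x j) := by
      rw [hset]
      ext m
      simp only [Set.mem_setOf_eq, Finset.coe_filter, Finset.mem_range, hjlt]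
      tauto
    have hcard := count_loops x T
    simp only [PhiMap]
    rw [hfin, Set.encard_coe_eq_coe_finsetCard]
    set c := ((Finset.range T).filter fun j => vtx x (j + 1) = vtx x j).card with hc
    rw [hjlt j]
    have hcast : ((c : ℕ∞) + (i : ℕ) + 1) = (((c + i + 1 : ℕ)) : ℕ∞) := by push_cast; ring
    rw [hcast, Nat.cast_lt]
    rcases Nat.eq_zero_or_pos T with h0 | h0
    · rw [h0] at hcard hT1 ⊢
      simp at hcard
      omega
    · have h2 : vtx x T ≤ (i : ℕ) + 1 := by
        obtain ⟨T', hT'⟩ := Nat.exists_eq_succ_of_ne_zero (show T ≠ 0 by omega)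
        have h3 := hmin T' (by omega)
        have h4 := vtx_succ x T'
        rw [Nat.succ_eq_add_one] at hT'
        rw [← hT'] at h4
        omega
      omega
  · push_neg at hb
    have htop : PhiMap n x i = ⊤ := by
      simp only [PhiMap]
      rw [hset]
      have heq : {j | vtx x (j + 1) = vtx x j ∧ vtx x j ≤ (i : ℕ)}
          = {j | vtx x (j + 1) = vtx x j} := by
        ext m; simp only [Set.mem_setOf_eq, and_iff_left_iff_imp]
        exact fun _ => hb m
      rw [heq]
      exact (loops_infinite x).encard_eq
    rw [htop]
    simp only [top_add]
    simp [hb j]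

lemma vtx_eq_of_inl {x : ↥(PathSp (sphS n) (sphT n))} {j : ℕ} {v : Fin (n + 1)}
    (h : x.1 j = Sum.inl v) : vtx x j = (v : ℕ) := by
  rw [vtx, h]; rfl

lemma vtx_eq_of_inr {x : ↥(PathSp (sphS n) (sphT n))} {j : ℕ} {a : Fin n}
    (h : x.1 j = Sum.inr a) : vtx x j = (a : ℕ) := by
  rw [vtx, h]; simp [sphS]

lemma phi_zero_iff (x : ↥(PathSp (sphS n) (sphT n))) (hx : x ∈ ELoop n) (i : Fin n) :
    PhiMap n x i = 0 ↔ (i : ℕ) < vtx x 0 := by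
  simp only [PhiMap, Set.encard_eq_zero]
  constructor
  · intro h
    by_contra h'
    push_neg at h'
    obtain ⟨v, hv⟩ := hx
    have hvtx := vtx_eq_of_inl hv
    have h0 : (0 : ℕ) ∈ {j : ℕ | ∃ v : Fin (n + 1), x.1 j = Sum.inl v ∧ (v : ℕ) ≤ (i : ℕ)} :=
      ⟨v, hv, by omega⟩
    rw [h] at h0
    exact h0
  · intro h
    rw [Set.eq_empty_iff_forall_notMem]
    rintro j ⟨v, hv, hvi⟩
    have hvtx := vtx_eq_of_inl hv
    have := vtx_mono x (Nat.zero_le j)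
    omega

lemma vtx0_aux {x y : ↥(PathSp (sphS n) (sphT n))} (hx : x ∈ ELoop n) (hy : y ∈ ELoop n)
    (h : PhiMap n x = PhiMap n y) : ¬ vtx x 0 < vtx y 0 := by
  intro hlt
  have hyn := vtx_le y 0
  set i : Fin n := ⟨vtx x 0, by omega⟩ with hi
  have h2 : PhiMap n y i = 0 := (phi_zero_iff y hy i).mpr hlt
  rw [← congrFun h i] at h2
  have := (phi_zero_iff x hx i).mp h2
  simp [hi] at this

lemma vtx_aux {x y : ↥(PathSp (sphS n) (sphT n))} (j : ℕ)
    (h : PhiMap n x = PhiMap n y) (hv0 : vtx x 0 = vtx y 0) : ¬ vtx x j < vtx y j := by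
  intro hlt
  have hyn := vtx_le y j
  set i : Fin n := ⟨vtx x j, by omega⟩ with hi
  have h1 : vtx x j ≤ (i : ℕ) := le_refl _
  rw [key x i j, h, hv0] at h1
  have h2 := (key y i j).mpr h1
  simp [hi] at h2
  omega

lemma phi_inj {x y : ↥(PathSp (sphS n) (sphT n))} (hx : x ∈ ELoop n) (hy : y ∈ ELoop n)
    (h : PhiMap n x = PhiMap n y) : x = y := by
  have hv0 : vtx x 0 = vtx y 0 := by
    rcases Nat.lt_trichotomy (vtx x 0) (vtx y 0) with h' | h' | h'
    · exact absurd h' (vtx0_aux hx hy h)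
    · exact h'
    · exact absurd h' (vtx0_aux hy hx h.symm)
  have hvtx : ∀ j, vtx x j = vtx y j := by
    intro j
    rcases Nat.lt_trichotomy (vtx x j) (vtx y j) with h' | h' | h'
    · exact absurd h' (vtx_aux j h hv0)
    · exact h'
    · exact absurd h' (vtx_aux j h.symm hv0.symm)
  apply Subtype.ext
  funext j
  have hl : (∃ v, x.1 j = Sum.inl v) ↔ (∃ v, y.1 j = Sum.inl v) := by
    rw [isLoop_iff, isLoop_iff, hvtx j, hvtx (j + 1)]
  rcases hex : x.1 j with v | a
  · obtain ⟨w, hw⟩ := hl.mp ⟨v, hex⟩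
    rw [hw]
    have h1 := vtx_eq_of_inl hex
    have h2 := vtx_eq_of_inl hw
    congr 1
    apply Fin.ext
    rw [← h1, ← h2, hvtx j]
  · rcases hey : y.1 j with w | b
    · have : ∃ v, x.1 j = Sum.inl v := hl.mpr ⟨w, hey⟩
      rw [hex] at this
      obtain ⟨v, hv⟩ := this
      cases hv
    · have h1 := vtx_eq_of_inr hex
      have h2 := vtx_eq_of_inr hey
      congr 1
      apply Fin.ext
      rw [← h1, ← h2, hvtx j]

/-! ### Surjectivity: construction of a path from a monotone tuple -/

lemma mem_iff_lt_card {s : Finset (Fin n)} (hs : ∀ a b : Fin n, a ≤ b → b ∈ s → a ∈ s)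
    (i : Fin n) : i ∈ s ↔ (i : ℕ) < s.card := by
  constructor
  · intro hi
    have hsub : Finset.Iic i ⊆ s := fun a ha => hs a i (Finset.mem_Iic.mp ha) hi
    have := Finset.card_le_card hsub
    rw [Fin.card_Iic] at this
    omega
  · intro hi
    by_contra hni
    have hsub : s ⊆ Finset.Iio i := by
      intro b hb
      rw [Finset.mem_Iio]
      by_contra hbi
      push_neg at hbi
      exact hni (hs i b hbi hb)
    have := Finset.card_le_card hsub
    rw [Fin.card_Iio] at this
    omega

variable (k : Fin n → ℕ∞)

/-- The number of zero entries of `k` (the starting vertex of the path). -/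
def zc : ℕ := (Finset.univ.filter fun i : Fin n => k i = 0).card

/-- The vertex of the path associated with `k` at time `j`. -/
def fV (j : ℕ) : ℕ :=
  (Finset.univ.filter fun i : Fin n =>
    k i + ((i : ℕ) : ℕ∞) + 1 ≤ ((j + zc k : ℕ) : ℕ∞)).card

variable {k}

lemma zc_mem (hk : Monotone k) (i : Fin n) : k i = 0 ↔ (i : ℕ) < zc k := by
  rw [zc, ← mem_iff_lt_card (fun a b hab hb => ?_) i, Finset.mem_filter]
  · simp
  · rw [Finset.mem_filter] at hb ⊢
    exact ⟨Finset.mem_univ _, le_antisymm (hb.2 ▸ hk hab) zero_le⟩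

lemma fV_le_iff (hk : Monotone k) (j : ℕ) (i : Fin n) :
    fV k j ≤ (i : ℕ) ↔ ((j + zc k : ℕ) : ℕ∞) < k i + ((i : ℕ) : ℕ∞) + 1 := by
  have hdc : ∀ a b : Fin n, a ≤ b →
      b ∈ (Finset.univ.filter fun i : Fin n =>
        k i + ((i : ℕ) : ℕ∞) + 1 ≤ ((j + zc k : ℕ) : ℕ∞)) →
      a ∈ (Finset.univ.filter fun i : Fin n =>
        k i + ((i : ℕ) : ℕ∞) + 1 ≤ ((j + zc k : ℕ) : ℕ∞)) := by
    intro a b hab hb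
    rw [Finset.mem_filter] at hb ⊢
    refine ⟨Finset.mem_univ _, le_trans ?_ hb.2⟩
    gcongr
    · exact hk hab
    · exact Nat.cast_le.mpr hab
  have h1 := mem_iff_lt_card hdc i
  simp only [Finset.mem_filter, Finset.mem_univ, true_and] at h1
  rw [fV]
  constructor
  · intro h
    by_contra h'
    push_neg at h'
    have := h1.mp h'
    omega
  · intro h
    by_contra h'
    push_neg at h'
    exact absurd (h1.mpr h') (not_le.mpr h)

lemma fV_le_n (j : ℕ) : fV k j ≤ n :=
  (Finset.card_filter_le _ _).trans (by simp)

lemma fV_mono : Monotone (fV k) := by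
  intro j j' hj
  apply Finset.card_le_card
  intro i hi
  rw [Finset.mem_filter] at hi ⊢
  refine ⟨Finset.mem_univ _, le_trans hi.2 ?_⟩
  rw [Nat.cast_le]
  omega

lemma fV_zc (hk : Monotone k) {j : ℕ} (hj : j ≤ 1) : fV k j = zc k := by
  have hfilter : (Finset.univ.filter fun i : Fin n =>
      k i + ((i : ℕ) : ℕ∞) + 1 ≤ ((j + zc k : ℕ) : ℕ∞))
      = Finset.univ.filter fun i : Fin n => k i = 0 := by
    ext i
    simp only [Finset.mem_filter, Finset.mem_univ, true_and]
    constructor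
    · intro h
      by_contra hne
      have hzi : zc k ≤ (i : ℕ) := by
        by_contra h'
        push_neg at h'
        exact hne ((zc_mem hk i).mpr h')
      have h1 : (1 : ℕ∞) ≤ k i := ENat.one_le_iff_ne_zero.mpr hne
      have h2 : (((i : ℕ) + 2 : ℕ) : ℕ∞) ≤ k i + ((i : ℕ) : ℕ∞) + 1 := by
        calc (((i : ℕ) + 2 : ℕ) : ℕ∞) = 1 + ((i : ℕ) : ℕ∞) + 1 := by push_cast; ring
          _ ≤ k i + ((i : ℕ) : ℕ∞) + 1 := by gcongr
      have h3 : ((j + zc k : ℕ) : ℕ∞) < (((i : ℕ) + 2 : ℕ) : ℕ∞) := by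
        rw [Nat.cast_lt]
        omega
      exact absurd h (not_le.mpr (lt_of_lt_of_le h3 h2))
    · intro h
      have hi := (zc_mem hk i).mp h
      rw [h]
      calc (0 : ℕ∞) + ((i : ℕ) : ℕ∞) + 1 = (((i : ℕ) + 1 : ℕ) : ℕ∞) := by push_cast; ring
        _ ≤ _ := by rw [Nat.cast_le]; omega
  rw [fV, hfilter]
  rfl

lemma fV_step (hk : Monotone k) (j : ℕ) : fV k (j + 1) ≤ fV k j + 1 := by
  rcases Nat.lt_or_ge (fV k j + 1) n with hlt | hge
  · have hlt0 : fV k j < n := by omega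
    have hle : (⟨fV k j, hlt0⟩ : Fin n) ≤ ⟨fV k j + 1, hlt⟩ := by
      rw [Fin.le_def]
      exact Nat.le_succ _
    have hki : k ⟨fV k j, hlt0⟩ ≤ k ⟨fV k j + 1, hlt⟩ := hk hle
    have h0 : fV k j ≤ ((⟨fV k j, hlt0⟩ : Fin n) : ℕ) := le_refl _
    rw [fV_le_iff hk] at h0
    have hgoal : fV k (j + 1) ≤ ((⟨fV k j + 1, hlt⟩ : Fin n) : ℕ) := by
      rw [fV_le_iff hk]
      by_cases htop : k ⟨fV k j + 1, hlt⟩ = ⊤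
      · rw [htop]
        simp only [top_add]
        exact WithTop.coe_lt_top _
      · have hk0top : k ⟨fV k j, hlt0⟩ ≠ ⊤ := fun h => htop (top_le_iff.mp (h ▸ hki))
        have hm' : ((k ⟨fV k j + 1, hlt⟩).toNat : ℕ∞) = k ⟨fV k j + 1, hlt⟩ :=
          ENat.coe_toNat htop
        have hm : ((k ⟨fV k j, hlt0⟩).toNat : ℕ∞) = k ⟨fV k j, hlt0⟩ :=
          ENat.coe_toNat hk0top
        set m' := (k ⟨fV k j + 1, hlt⟩).toNat
        set m := (k ⟨fV k j, hlt0⟩).toNat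
        rw [← hm] at h0 hki
        rw [← hm'] at hki ⊢
        have hki' : m ≤ m' := by exact_mod_cast hki
        have hval : (((⟨fV k j, hlt0⟩ : Fin n)) : ℕ) = fV k j := rfl
        rw [hval] at h0
        have h0' : j + zc k < m + fV k j + 1 := by exact_mod_cast h0
        have hval' : (((⟨fV k j + 1, hlt⟩ : Fin n)) : ℕ) = fV k j + 1 := rfl
        rw [hval']
        exact_mod_cast (show j + 1 + zc k < m' + (fV k j + 1) + 1 by omega)
    exact hgoal
  · exact (fV_le_n (k := k) (j + 1)).trans hge

/-- The path associated with a monotone tuple `k`. -/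
def pathOf (hk : Monotone k) : ℕ → SphE n := fun j =>
  if h : fV k (j + 1) = fV k j then
    Sum.inl ⟨fV k j, by have := fV_le_n (k := k) j; omega⟩
  else
    Sum.inr ⟨fV k j, by
      have h1 : fV k j ≤ fV k (j + 1) := fV_mono (Nat.le_succ j)
      have h2 := fV_step hk j
      have h3 := fV_le_n (k := k) (j + 1)
      omega⟩

lemma pathOf_succ_eq {hk : Monotone k} {j : ℕ} (h : fV k (j + 1) = fV k j) :
    pathOf hk j = Sum.inl ⟨fV k j, by have := fV_le_n (k := k) j; omega⟩ := by
  rw [pathOf, dif_pos h]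

lemma pathOf_succ_ne {hk : Monotone k} {j : ℕ} (h : ¬ fV k (j + 1) = fV k j) :
    pathOf hk j = Sum.inr ⟨fV k j, by
      have h1 : fV k j ≤ fV k (j + 1) := fV_mono (Nat.le_succ j)
      have h2 := fV_step hk j
      have h3 := fV_le_n (k := k) (j + 1)
      omega⟩ := by
  rw [pathOf, dif_neg h]

lemma pathOf_src (hk : Monotone k) (m : ℕ) :
    sphS n (pathOf hk m) = ⟨fV k m, by have := fV_le_n (k := k) m; omega⟩ := by
  by_cases h : fV k (m + 1) = fV k m
  · rw [pathOf_succ_eq h]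
    rfl
  · rw [pathOf_succ_ne h]
    apply Fin.ext
    simp [sphS]

lemma pathOf_tgt (hk : Monotone k) (j : ℕ) :
    sphT n (pathOf hk j) = ⟨fV k (j + 1), by have := fV_le_n (k := k) (j + 1); omega⟩ := by
  by_cases h : fV k (j + 1) = fV k j
  · rw [pathOf_succ_eq h]
    apply Fin.ext
    simp [sphT, h]
  · rw [pathOf_succ_ne h]
    apply Fin.ext
    simp only [sphT, Fin.val_succ]
    have h1 : fV k j ≤ fV k (j + 1) := fV_mono (Nat.le_succ j)
    have h2 := fV_step hk j
    omega

lemma pathOf_mem (hk : Monotone k) : pathOf hk ∈ PathSp (sphS n) (sphT n) := by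
  intro j
  rw [pathOf_tgt hk, pathOf_src hk]

/-- The path associated with `k`, as an element of the path space. -/
def pathOf' (hk : Monotone k) : ↥(PathSp (sphS n) (sphT n)) := ⟨pathOf hk, pathOf_mem hk⟩

lemma vtx_pathOf (hk : Monotone k) (m : ℕ) : vtx (pathOf' hk) m = fV k m := by
  show (sphS n (pathOf hk m) : ℕ) = fV k m
  rw [pathOf_src hk]

lemma pathOf_eloop (hk : Monotone k) : pathOf' hk ∈ ELoop n := by
  refine ⟨⟨fV k 0, by have := fV_le_n (k := k) 0; omega⟩, ?_⟩
  show pathOf hk 0 = _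
  exact pathOf_succ_eq (by rw [fV_zc hk (le_refl 1), fV_zc hk (Nat.zero_le 1)])

lemma enat_eq_of_forall_lt_iff {v : ℕ} {A B : ℕ∞} (hA : (v : ℕ∞) < A) (hB : (v : ℕ∞) < B)
    (h : ∀ j : ℕ, ((j + v : ℕ) : ℕ∞) < A ↔ ((j + v : ℕ) : ℕ∞) < B) : A = B := by
  have aux : ∀ A B : ℕ∞, (v : ℕ∞) < A →
      (∀ j : ℕ, ((j + v : ℕ) : ℕ∞) < A ↔ ((j + v : ℕ) : ℕ∞) < B) → A < B → False := by
    intro A B hA h hlt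
    have hAtop : A ≠ ⊤ := ne_top_of_lt hlt
    have hm : ((A.toNat : ℕ) : ℕ∞) = A := ENat.coe_toNat hAtop
    have hv : v < A.toNat := by
      rw [← hm] at hA
      exact_mod_cast hA
    have h1 : ((A.toNat - v) + v : ℕ) = A.toNat := by omega
    have hB' : (((A.toNat - v) + v : ℕ) : ℕ∞) < B := by rw [h1, hm]; exact hlt
    have h2 := (h _).mpr hB'
    rw [h1, hm] at h2
    exact lt_irrefl _ h2
  rcases lt_trichotomy A B with hlt | he | hlt
  · exact (aux A B hA h hlt).elim
  · exact he
  · exact (aux B A hB (fun j => (h j).symm) hlt).elim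

lemma phi_pathOf (hk : Monotone k) : PhiMap n (pathOf' hk) = k := by
  funext i
  by_cases hiv : (i : ℕ) < zc k
  · have h1 : k i = 0 := (zc_mem hk i).mpr hiv
    have h2 : PhiMap n (pathOf' hk) i = 0 := by
      rw [phi_zero_iff _ (pathOf_eloop hk) i, vtx_pathOf hk 0, fV_zc hk (Nat.zero_le 1)]
      exact hiv
    rw [h1, h2]
  · push_neg at hiv
    have hiff : ∀ j : ℕ, ((j + zc k : ℕ) : ℕ∞) < PhiMap n (pathOf' hk) i + ((i : ℕ) : ℕ∞) + 1
        ↔ ((j + zc k : ℕ) : ℕ∞) < k i + ((i : ℕ) : ℕ∞) + 1 := by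
      intro j
      have hkey := key (pathOf' hk) i j
      rw [vtx_pathOf hk j, vtx_pathOf hk 0, fV_zc hk (Nat.zero_le 1)] at hkey
      exact hkey.symm.trans (fV_le_iff hk j i)
    have bound : ∀ C : ℕ∞, ((zc k : ℕ) : ℕ∞) < C + ((i : ℕ) : ℕ∞) + 1 := by
      intro C
      have h1 : ((zc k : ℕ) : ℕ∞) < ((i : ℕ) : ℕ∞) + 1 := by
        rw [show ((i : ℕ) : ℕ∞) + 1 = (((i : ℕ) + 1 : ℕ) : ℕ∞) by push_cast; ring,
          Nat.cast_lt]
        omega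
      calc ((zc k : ℕ) : ℕ∞) < ((i : ℕ) : ℕ∞) + 1 := h1
        _ ≤ C + ((i : ℕ) : ℕ∞) + 1 := by rw [add_assoc]; exact le_add_self
    have heq := enat_eq_of_forall_lt_iff (bound _) (bound _) hiff
    rw [add_assoc, add_assoc] at heq
    refine WithTop.add_right_cancel ?_ heq
    rw [show ((i : ℕ) : ℕ∞) + 1 = (((i : ℕ) + 1 : ℕ) : ℕ∞) by push_cast; ring]
    exact ENat.coe_ne_top _

/-- Surjectivity of `Φ` onto monotone tuples. -/
lemma phi_surj (k : Fin n → ℕ∞) (hk : Monotone k) :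
    ∃ x : ↥(PathSp (sphS n) (sphT n)), x ∈ ELoop n ∧ PhiMap n x = k :=
  ⟨pathOf' hk, pathOf_eloop hk, phi_pathOf hk⟩

/-! ### Topology -/

instance : DiscreteTopology (SphE n) := by infer_instance

lemma isOpen_coord (j : ℕ) (Q : Set (SphE n)) :
    IsOpen {x : ↥(ELoop n) | x.1.1 j ∈ Q} := by
  have hc : Continuous fun x : ↥(ELoop n) => x.1.1 j :=
    (continuous_apply j).comp (continuous_subtype_val.comp continuous_subtype_val)
  exact (isOpen_discrete Q).preimage hc

lemma isOpen_phi_le (i : Fin n) (m : ℕ) :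
    IsOpen {x : ↥(ELoop n) | PhiMap n x.1 i ≤ (m : ℕ∞)} := by
  rw [isOpen_iff_forall_mem_open]
  intro x hx
  simp only [Set.mem_setOf_eq] at hx
  have hN : ∃ N, 1 ≤ N ∧ (i : ℕ) < vtx x.1 N := by
    by_contra hcon
    push_neg at hcon
    have hall : ∀ j, vtx x.1 j ≤ (i : ℕ) := by
      intro j
      rcases Nat.eq_zero_or_pos j with h0 | h0
      · rw [h0]
        exact le_trans (vtx_mono x.1 (Nat.zero_le 1)) (hcon 1 (le_refl 1))
      · exact hcon j h0
    have htop : PhiMap n x.1 i = ⊤ := by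
      simp only [PhiMap]
      rw [phi_set_eq x.1 i]
      have heq : {j | vtx x.1 (j + 1) = vtx x.1 j ∧ vtx x.1 j ≤ (i : ℕ)}
          = {j | vtx x.1 (j + 1) = vtx x.1 j} := by
        ext j
        simp only [Set.mem_setOf_eq, and_iff_left_iff_imp]
        exact fun _ => hall j
      rw [heq]
      exact (loops_infinite x.1).encard_eq
    rw [htop] at hx
    simp at hx
  obtain ⟨N, hN1, hNv⟩ := hN
  refine ⟨{y : ↥(ELoop n) | ∀ j ∈ Finset.range N, y.1.1 j = x.1.1 j}, ?_, ?_, ?_⟩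
  · intro y hy
    simp only [Set.mem_setOf_eq, Finset.mem_range] at hy ⊢
    have hvtxN : vtx y.1 N = vtx x.1 N := by
      obtain ⟨N', hN'⟩ := Nat.exists_eq_succ_of_ne_zero (show N ≠ 0 by omega)
      rw [Nat.succ_eq_add_one] at hN'
      rw [hN', vtx_succ_eq, vtx_succ_eq, hy N' (by omega)]
    have hsub : {j : ℕ | ∃ v : Fin (n + 1), y.1.1 j = Sum.inl v ∧ (v : ℕ) ≤ (i : ℕ)}
        ⊆ {j : ℕ | ∃ v : Fin (n + 1), x.1.1 j = Sum.inl v ∧ (v : ℕ) ≤ (i : ℕ)} := by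
      rintro j ⟨v, hv, hvi⟩
      rcases Nat.lt_or_ge j N with hj | hj
      · exact ⟨v, by rw [← hy j hj]; exact hv, hvi⟩
      · exfalso
        have h1 : vtx y.1 j = (v : ℕ) := vtx_eq_of_inl hv
        have h2 := vtx_mono y.1 hj
        omega
    exact le_trans (Set.encard_mono hsub) hx
  · have heq : {y : ↥(ELoop n) | ∀ j ∈ Finset.range N, y.1.1 j = x.1.1 j}
        = ⋂ j ∈ Finset.range N, {y : ↥(ELoop n) | y.1.1 j ∈ ({x.1.1 j} : Set (SphE n))} := by
      ext y
      simp
    rw [heq]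
    exact isOpen_biInter_finset fun j _ => isOpen_coord j _
  · simp

lemma phi_continuous (i : Fin n) :
    Continuous fun x : ↥(ELoop n) => PhiMap n x.1 i := by
  have h : Continuous[_, Preorder.topology ℕ∞] (fun x : ↥(ELoop n) => PhiMap n x.1 i) := by
    refine continuous_generateFrom_iff.mpr ?_
    rintro s ⟨a, rfl | rfl⟩
    · -- preimage of (a, ∞]
      induction a using ENat.recTopCoe with
      | top =>
        convert isOpen_empty
        ext x
        simp [not_top_lt]
      | coe m =>
        have heq : (fun x : ↥(ELoop n) => PhiMap n x.1 i) ⁻¹' {b | (m : ℕ∞) < b}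
            = ⋃ (s : Finset ℕ) (_ : s.card = m + 1),
                {x : ↥(ELoop n) | ∀ j ∈ s, x.1.1 j ∈
                  {e : SphE n | ∃ v : Fin (n + 1), e = Sum.inl v ∧ (v : ℕ) ≤ (i : ℕ)}} := by
          ext x
          simp only [Set.mem_preimage, Set.mem_setOf_eq, Set.mem_iUnion]
          constructor
          · intro hx
            have hle : ((m + 1 : ℕ) : ℕ∞) ≤ PhiMap n x.1 i := by
              rw [show ((m + 1 : ℕ) : ℕ∞) = (m : ℕ∞) + 1 by push_cast; ring]
              exact Order.add_one_le_of_lt hx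
            obtain ⟨t, hts, htc⟩ := Set.exists_subset_encard_eq hle
            have htfin : t.Finite := Set.finite_of_encard_eq_coe htc
            refine ⟨htfin.toFinset, ?_, ?_⟩
            · have h2 := htfin.encard_eq_coe_toFinset_card
              rw [htc] at h2
              exact_mod_cast h2.symm
            · intro j hj
              have hjt : j ∈ t := by simpa using hj
              exact hts hjt
          · rintro ⟨s, hcard, hall⟩
            have hsub : (↑s : Set ℕ) ⊆
                {j : ℕ | ∃ v : Fin (n + 1), x.1.1 j = Sum.inl v ∧ (v : ℕ) ≤ (i : ℕ)} := by
              intro j hj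
              exact hall j hj
            have h2 := Set.encard_mono hsub
            rw [Set.encard_coe_eq_coe_finsetCard, hcard] at h2
            exact lt_of_lt_of_le (Nat.cast_lt.mpr (Nat.lt_succ_self m)) h2
        rw [show Set.Ioi (m : ℕ∞) = {b | (m : ℕ∞) < b} from rfl, heq]
        refine isOpen_iUnion fun s => isOpen_iUnion fun _ => ?_
        have h3 : {x : ↥(ELoop n) | ∀ j ∈ s, x.1.1 j ∈
              {e : SphE n | ∃ v : Fin (n + 1), e = Sum.inl v ∧ (v : ℕ) ≤ (i : ℕ)}}
            = ⋂ j ∈ s, {x : ↥(ELoop n) | x.1.1 j ∈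
              {e : SphE n | ∃ v : Fin (n + 1), e = Sum.inl v ∧ (v : ℕ) ≤ (i : ℕ)}} := by
          ext x
          simp
        rw [h3]
        exact isOpen_biInter_finset fun j _ => isOpen_coord j _
    · -- preimage of [0, a)
      have heq : (fun x : ↥(ELoop n) => PhiMap n x.1 i) ⁻¹' {b | b < a}
          = ⋃ (m : ℕ) (_ : (m : ℕ∞) < a),
              {x : ↥(ELoop n) | PhiMap n x.1 i ≤ (m : ℕ∞)} := by
        ext x
        simp only [Set.mem_preimage, Set.mem_setOf_eq, Set.mem_iUnion]
        constructor
        · intro hx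
          have hne : PhiMap n x.1 i ≠ ⊤ := ne_top_of_lt hx
          refine ⟨(PhiMap n x.1 i).toNat, ?_, ?_⟩
          · rw [ENat.coe_toNat hne]
            exact hx
          · rw [ENat.coe_toNat hne]
        · rintro ⟨m, hma, hm⟩
          exact lt_of_le_of_lt hm hma
      rw [show Set.Iio a = {b | b < a} from rfl, heq]
      exact isOpen_iUnion fun m => isOpen_iUnion fun _ => isOpen_phi_le i m
  exact h

lemma isClosed_pathSp : IsClosed (PathSp (sphS n) (sphT n)) := by
  have heq : PathSp (sphS n) (sphT n)
      = ⋂ j : ℕ, {x : ℕ → SphE n | sphT n (x j) = sphS n (x (j + 1))} := by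
    ext x
    simp only [Set.mem_iInter, Set.mem_setOf_eq]
    rfl
  rw [heq]
  refine isClosed_iInter fun j => isClosed_eq ?_ ?_
  · exact Continuous.comp (continuous_of_discreteTopology (f := sphT n)) (continuous_apply j)
  · exact Continuous.comp (continuous_of_discreteTopology (f := sphS n)) (continuous_apply (j + 1))

instance : CompactSpace ↥(PathSp (sphS n) (sphT n)) :=
  isCompact_iff_compactSpace.mp isClosed_pathSp.isCompact

lemma isClosed_eloop : IsClosed (ELoop n) := by
  have heq : ELoop n = (fun x : ↥(PathSp (sphS n) (sphT n)) => x.1 0) ⁻¹'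
      {e : SphE n | ∃ v : Fin (n + 1), e = Sum.inl v} := rfl
  rw [heq]
  exact (isClosed_discrete _).preimage ((continuous_apply 0).comp continuous_subtype_val)

instance : CompactSpace ↥(ELoop n) :=
  isCompact_iff_compactSpace.mp (isClosed_eloop.isCompact)

lemma phi_monotone (x : ↥(PathSp (sphS n) (sphT n))) : Monotone (PhiMap n x) := by
  intro i i' hii
  apply Set.encard_mono
  rintro j ⟨v, hv, hvi⟩
  exact ⟨v, hv, le_trans hvi (by exact_mod_cast hii)⟩

end Stmt8

/-- For the graph of `S^{2n+1}_q` (`n ≥ 1`), the loop-counting map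
`Φ : E^∞_ℓ → ℕ̄ⁿ_↗` is well defined (takes values in the increasing tuples) and is a
homeomorphism onto `ℕ̄ⁿ_↗ = {k : k₁ ≤ … ≤ k_n}`. -/
theorem stmt_8 (n : ℕ) (hn : 1 ≤ n) :
    (∀ x : ↥(ELoop n), Monotone (PhiMap n x.1)) ∧
    ∃ h : ↥(ELoop n) ≃ₜ {k : Fin n → ℕ∞ // Monotone k},
      ∀ x : ↥(ELoop n), (h x).1 = PhiMap n x.1 := by
  refine ⟨fun x => Stmt8.phi_monotone x.1, ?_⟩
  let F : ↥(ELoop n) → {k : Fin n → ℕ∞ // Monotone k} :=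
    fun x => ⟨PhiMap n x.1, Stmt8.phi_monotone x.1⟩
  have hbij : Function.Bijective F := by
    constructor
    · intro x y hxy
      have h1 : PhiMap n x.1 = PhiMap n y.1 := congrArg Subtype.val hxy
      exact Subtype.ext (Stmt8.phi_inj x.2 y.2 h1)
    · rintro ⟨k, hk⟩
      obtain ⟨x, hx, hphi⟩ := Stmt8.phi_surj k hk
      exact ⟨⟨x, hx⟩, Subtype.ext hphi⟩
  have hcont : Continuous F := by
    refine Continuous.subtype_mk ?_ _
    exact continuous_pi fun i => Stmt8.phi_continuous i
  exact ⟨Continuous.homeoOfEquivCompactToT2 (f := Equiv.ofBijective F hbij) hcont,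
    fun x => rfl⟩
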